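/- Let F: B(p₀,r) ⊂ ℝ^d → ℝ^d be a C² map with ‖(DF(p₀))⁻¹‖ ≤ R₁⁻¹ and |∂^α F(p)| ≤ R₂⁻¹ for all p ∈ B(p₀,r), |α| = 2. Then there is a constant c_d > 0 depending only on d such that for any 0 < r₀ ≤ min(c_d R₁ R₂, r), the image F(B(p₀,r₀)) contains the ball of radius (1/2) r₀ R₁ centered at F(p₀). -/

import Mathlib

open Metric NNReal

lemma coord_abs_le_norm {d : ℕ} (v : EuclideanSpace ℝ (Fin d)) (i : Fin d) : |v i| ≤ ‖v‖ := by
  rw [EuclideanSpace.norm_eq]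
  have h1 : |v i| = Real.sqrt (‖v i‖ ^ 2) := by
    rw [Real.sqrt_sq (norm_nonneg _), Real.norm_eq_abs]
  rw [h1]
  exact Real.sqrt_le_sqrt (Finset.single_le_sum (f := fun j => ‖v j‖ ^ 2)
    (fun j _ => sq_nonneg _) (Finset.mem_univ i))

lemma euclid_norm_le {d : ℕ} (x : EuclideanSpace ℝ (Fin d)) {C : ℝ} (hC : 0 ≤ C)
    (h : ∀ k, |x k| ≤ C) : ‖x‖ ≤ Real.sqrt d * C := by
  rw [EuclideanSpace.norm_eq]
  have h1 : ∑ k, ‖x k‖ ^ 2 ≤ (d : ℝ) * C ^ 2 := by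
    calc ∑ k, ‖x k‖ ^ 2 ≤ ∑ _k : Fin d, C ^ 2 :=
          Finset.sum_le_sum fun k _ => by
            rw [Real.norm_eq_abs]; nlinarith [h k, abs_nonneg (x k)]
      _ = (d : ℝ) * C ^ 2 := by simp [Finset.card_univ]
  calc Real.sqrt (∑ k, ‖x k‖ ^ 2) ≤ Real.sqrt ((d : ℝ) * C ^ 2) := Real.sqrt_le_sqrt h1
    _ = Real.sqrt d * C := by
        rw [Real.sqrt_mul (by positivity), Real.sqrt_sq hC]

lemma bilin_norm_le {d : ℕ}
    (B : EuclideanSpace ℝ (Fin d) →L[ℝ] EuclideanSpace ℝ (Fin d) →L[ℝ] EuclideanSpace ℝ (Fin d))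
    {C : ℝ} (hC : 0 ≤ C)
    (h : ∀ i j, ‖B (EuclideanSpace.single i 1) (EuclideanSpace.single j 1)‖ ≤ C) :
    ‖B‖ ≤ (d : ℝ) ^ 2 * C := by
  apply ContinuousLinearMap.opNorm_le_bound _ (by positivity)
  intro v
  rw [show (d : ℝ) ^ 2 * C * ‖v‖ = ((d : ℝ) ^ 2 * C * ‖v‖) by rfl]
  apply ContinuousLinearMap.opNorm_le_bound _ (by positivity)
  intro w
  have hrep : B v w = ∑ i : Fin d, ∑ j : Fin d,
      (v i * w j) • B (EuclideanSpace.single i 1) (EuclideanSpace.single j 1) := by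
    conv_lhs => rw [← (EuclideanSpace.basisFun (Fin d) ℝ).sum_repr v,
      ← (EuclideanSpace.basisFun (Fin d) ℝ).sum_repr w]
    simp [EuclideanSpace.basisFun_apply, EuclideanSpace.basisFun_repr, map_sum,
      ContinuousLinearMap.sum_apply, ContinuousLinearMap.smul_apply, map_smul, mul_smul,
      Finset.smul_sum]
    rw [Finset.sum_comm]
    exact Finset.sum_congr rfl fun i _ => Finset.sum_congr rfl fun j _ => smul_comm _ _ _
  rw [hrep]
  calc ‖∑ i : Fin d, ∑ j : Fin d, (v i * w j) •
        B (EuclideanSpace.single i 1) (EuclideanSpace.single j 1)‖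
      ≤ ∑ i : Fin d, ∑ j : Fin d, ‖(v i * w j) •
        B (EuclideanSpace.single i 1) (EuclideanSpace.single j 1)‖ := by
        refine (norm_sum_le _ _).trans (Finset.sum_le_sum fun i _ => norm_sum_le _ _)
    _ ≤ ∑ _i : Fin d, ∑ _j : Fin d, ‖v‖ * ‖w‖ * C := by
        refine Finset.sum_le_sum fun i _ => Finset.sum_le_sum fun j _ => ?_
        rw [norm_smul, Real.norm_eq_abs, abs_mul]
        exact mul_le_mul (mul_le_mul (coord_abs_le_norm v i) (coord_abs_le_norm w j)
          (abs_nonneg _) (norm_nonneg _)) (h i j) (norm_nonneg _) (by positivity)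
    _ = (d : ℝ) ^ 2 * C * ‖v‖ * ‖w‖ := by
        simp [Finset.sum_const, Finset.card_univ]; ring

theorem stmt_1 (d : ℕ) :
    ∃ c : ℝ, 0 < c ∧
      ∀ (F : EuclideanSpace ℝ (Fin d) → EuclideanSpace ℝ (Fin d))
        (p₀ : EuclideanSpace ℝ (Fin d)) (r R₁ R₂ : ℝ),
        0 < r → 0 < R₁ → 0 < R₂ →
        ContDiffOn ℝ 2 F (ball p₀ r) →
        (∃ L : EuclideanSpace ℝ (Fin d) ≃L[ℝ] EuclideanSpace ℝ (Fin d),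
          (L : EuclideanSpace ℝ (Fin d) →L[ℝ] EuclideanSpace ℝ (Fin d)) = fderiv ℝ F p₀ ∧
          ‖(L.symm : EuclideanSpace ℝ (Fin d) →L[ℝ] EuclideanSpace ℝ (Fin d))‖ ≤ R₁⁻¹) →
        (∀ p ∈ ball p₀ r, ∀ i j k : Fin d,
          |iteratedFDeriv ℝ 2 F p
            ![EuclideanSpace.single i 1, EuclideanSpace.single j 1] k| ≤ R₂⁻¹) →
        ∀ r₀ : ℝ, 0 < r₀ → r₀ ≤ min (c * R₁ * R₂) r →
          ball (F p₀) (r₀ * R₁ / 2) ⊆ F '' (ball p₀ r₀) := by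
  refine ⟨(2 * ((d : ℝ) ^ 3 + 1))⁻¹, by positivity, ?_⟩
  set c : ℝ := (2 * ((d : ℝ) ^ 3 + 1))⁻¹ with hc_def
  rintro F p₀ r R₁ R₂ hr hR₁ hR₂ hF ⟨L, hL, hLsymm⟩ hD2 r₀ hr₀ hr₀le
  rcases Nat.eq_zero_or_pos d with hd | hd
  · -- trivial case: the space is a subsingleton
    subst hd
    intro y _
    refine ⟨p₀, mem_ball_self hr₀, ?_⟩
    exact Subsingleton.elim _ _
  -- main case
  have hr₀c : r₀ ≤ c * R₁ * R₂ := le_trans hr₀le (min_le_left _ _)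
  have hr₀r : r₀ ≤ r := le_trans hr₀le (min_le_right _ _)
  set M : ℝ := (d : ℝ) ^ 3 * R₂⁻¹ with hM_def
  have hM0 : 0 ≤ M := by positivity
  -- differentiability facts
  have hfd : ∀ x ∈ ball p₀ r, DifferentiableAt ℝ F x := fun x hx =>
    (hF.contDiffAt ((isOpen_ball).mem_nhds hx)).differentiableAt (by norm_num)
  have hfd2 : ∀ x ∈ ball p₀ r, DifferentiableAt ℝ (fderiv ℝ F) x := fun x hx =>
    ((hF.contDiffAt ((isOpen_ball).mem_nhds hx)).fderiv_right (m := 1)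
      (by norm_num)).differentiableAt one_ne_zero
  -- bound on the second derivative
  have hBnorm : ∀ p ∈ ball p₀ r, ‖fderiv ℝ (fderiv ℝ F) p‖ ≤ M := by
    intro p hp
    have hsq : Real.sqrt d * R₂⁻¹ ≥ 0 := by positivity
    have h1 : ‖fderiv ℝ (fderiv ℝ F) p‖ ≤ (d : ℝ) ^ 2 * (Real.sqrt d * R₂⁻¹) := by
      apply bilin_norm_le _ hsq
      intro i j
      apply euclid_norm_le _ (by positivity)
      intro k
      have h2 := hD2 p hp i j k
      have h3 : iteratedFDeriv ℝ 2 F p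
          ![EuclideanSpace.single i 1, EuclideanSpace.single j 1] =
          fderiv ℝ (fderiv ℝ F) p (EuclideanSpace.single i 1) (EuclideanSpace.single j 1) := by
        rw [iteratedFDeriv_two_apply]
        simp
      rw [h3] at h2
      exact h2
    refine h1.trans ?_
    rw [hM_def]
    have hd1 : (1 : ℝ) ≤ (d : ℝ) := by exact_mod_cast hd
    have hsd : Real.sqrt d ≤ (d : ℝ) := by
      nlinarith [Real.sq_sqrt (show (0:ℝ) ≤ (d:ℝ) by positivity), Real.sqrt_nonneg (d:ℝ)]
    have : (d : ℝ) ^ 2 * (Real.sqrt d * R₂⁻¹) ≤ (d : ℝ) ^ 2 * ((d : ℝ) * R₂⁻¹) := by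
      apply mul_le_mul_of_nonneg_left _ (by positivity)
      exact mul_le_mul_of_nonneg_right hsd (by positivity)
    refine this.trans (le_of_eq ?_)
    ring
  -- L.symm has positive norm
  have hnt : Nontrivial (EuclideanSpace ℝ (Fin d)) := by
    have : Nonempty (Fin d) := ⟨⟨0, hd⟩⟩
    infer_instance
  have hLsymm_pos : 0 < ‖(L.symm : EuclideanSpace ℝ (Fin d) →L[ℝ] EuclideanSpace ℝ (Fin d))‖ := by
    rw [norm_pos_iff]
    intro h0
    obtain ⟨x, hx⟩ := exists_ne (0 : EuclideanSpace ℝ (Fin d))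
    apply hx
    have : L.symm (L x) = 0 := by
      rw [show L.symm (L x) = (L.symm : EuclideanSpace ℝ (Fin d) →L[ℝ] _) (L x) from rfl, h0]
      rfl
    rwa [L.symm_apply_apply] at this
  have hR1le : R₁ ≤ ‖(L.symm : EuclideanSpace ℝ (Fin d) →L[ℝ] EuclideanSpace ℝ (Fin d))‖⁻¹ := by
    rw [← inv_inv R₁]
    exact inv_anti₀ (by positivity) hLsymm
  -- key smallness: M * r₀ ≤ R₁ / 2
  have hMr₀ : M * r₀ ≤ R₁ / 2 := by
    have h1 : M * r₀ ≤ M * (c * R₁ * R₂) := mul_le_mul_of_nonneg_left hr₀c hM0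
    refine h1.trans ?_
    rw [hM_def, hc_def]
    rw [show (d : ℝ) ^ 3 * R₂⁻¹ * ((2 * ((d : ℝ) ^ 3 + 1))⁻¹ * R₁ * R₂) =
      ((d : ℝ) ^ 3 / ((d : ℝ) ^ 3 + 1)) * (R₂⁻¹ * R₂) * R₁ / 2 by field_simp]
    rw [inv_mul_cancel₀ (ne_of_gt hR₂)]
    have : (d : ℝ) ^ 3 / ((d : ℝ) ^ 3 + 1) ≤ 1 := by
      rw [div_le_one (by positivity)]; linarith
    nlinarith
  -- now prove the inclusion
  intro y hy
  rw [mem_ball] at hy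
  set ε : ℝ := 2 * dist y (F p₀) / R₁ with hε_def
  have hε0 : 0 ≤ ε := by positivity
  have hεlt : ε < r₀ := by
    rw [hε_def, div_lt_iff₀ hR₁]
    nlinarith [dist_nonneg (x := y) (y := F p₀)]
  have hsub : closedBall p₀ ε ⊆ ball p₀ r₀ := closedBall_subset_ball hεlt
  have hsub' : closedBall p₀ ε ⊆ ball p₀ r := hsub.trans (ball_subset_ball hr₀r)
  have hp₀mem : p₀ ∈ ball p₀ r := mem_ball_self hr
  -- the approximation property
  have happrox : ApproximatesLinearOn F
      (L : EuclideanSpace ℝ (Fin d) →L[ℝ] EuclideanSpace ℝ (Fin d))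
      (closedBall p₀ ε) (Real.toNNReal (M * r₀)) := by
    intro a ha b hb
    have hcoe : ((Real.toNNReal (M * r₀) : ℝ≥0) : ℝ) = M * r₀ :=
      Real.coe_toNNReal _ (mul_nonneg hM0 hr₀.le)
    rw [hcoe]
    refine (convex_closedBall p₀ ε).norm_image_sub_le_of_norm_fderiv_le'
      (fun z hz => hfd z (hsub' hz)) ?_ hb ha
    intro z hz
    have hlip : ‖fderiv ℝ F z - fderiv ℝ F p₀‖ ≤ M * ‖z - p₀‖ :=
      (convex_ball p₀ r).norm_image_sub_le_of_norm_fderiv_le hfd2 hBnorm hp₀mem (hsub' hz)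
    rw [hL]
    refine hlip.trans ?_
    have hz' : ‖z - p₀‖ ≤ ε := by
      rw [← dist_eq_norm]; exact mem_closedBall.1 hz
    calc M * ‖z - p₀‖ ≤ M * ε := mul_le_mul_of_nonneg_left hz' hM0
      _ ≤ M * r₀ := mul_le_mul_of_nonneg_left hεlt.le hM0
  -- apply the surjectivity result
  have hsurj := happrox.surjOn_closedBall_of_nonlinearRightInverse
    L.toNonlinearRightInverse hε0 (subset_refl _)
  have hymem : y ∈ closedBall (F p₀)
      (((L.toNonlinearRightInverse.nnnorm : ℝ)⁻¹ - (Real.toNNReal (M * r₀) : ℝ≥0)) * ε) := by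
    rw [mem_closedBall]
    have hdist : dist y (F p₀) = R₁ / 2 * ε := by
      rw [hε_def]; field_simp
    rw [hdist]
    have hcoe : ((Real.toNNReal (M * r₀) : ℝ≥0) : ℝ) = M * r₀ :=
      Real.coe_toNNReal _ (mul_nonneg hM0 hr₀.le)
    have hnn : (L.toNonlinearRightInverse.nnnorm : ℝ) =
        ‖(L.symm : EuclideanSpace ℝ (Fin d) →L[ℝ] EuclideanSpace ℝ (Fin d))‖ := rfl
    rw [hcoe, hnn]
    have : R₁ / 2 ≤ ‖(L.symm : EuclideanSpace ℝ (Fin d) →L[ℝ] EuclideanSpace ℝ (Fin d))‖⁻¹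
        - M * r₀ := by linarith
    exact mul_le_mul_of_nonneg_right this hε0
  obtain ⟨x, hx, hfx⟩ := hsurj hymem
  exact ⟨x, hsub hx, hfx⟩
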